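/- Let W₀ be the subgroup of the orthogonal group of V generated by the reflections s_α with α ∈ Δ⁰. Then: W₀ is finite; every w ∈ W₀ fixes A pointwise and maps each of the sets Δ⁺, Δ⁰, Δ⁻ onto itself; the orthogonal projection π_A onto A equals the average (1/|W₀|)·Σ_{w ∈ W₀} w; and consequently, if X ∈ V satisfies ⟨α, X⟩ > 0 for every α ∈ Δ⁺, then ⟨α, π_A(X)⟩ > 0 for every α ∈ Δ⁺. -/

import Mathlib

open RealInnerProductSpace Finset

section Aux

variable {V : Type*} [NormedAddCommGroup V] [InnerProductSpace ℝ V] [FiniteDimensional ℝ V]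

lemma refl_formula (α β : V) :
    Submodule.reflection (Submodule.span ℝ {α})ᗮ β = β - (2 * ⟪β, α⟫ / ⟪α, α⟫) • α := by
  rw [Submodule.reflection_orthogonal_apply, Submodule.reflection_singleton_apply]
  rw [real_inner_self_eq_norm_sq, real_inner_comm β α]
  simp only [RCLike.ofReal_real_eq_id, id_eq]
  rw [two_smul]
  module

lemma iInf_orth_eq (S : Set V) :
    (⨅ α ∈ S, (Submodule.span ℝ {α})ᗮ) = (Submodule.span ℝ S)ᗮ := by
  apply le_antisymm
  · intro x hx
    rw [Submodule.mem_iInf] at hx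
    rw [Submodule.mem_orthogonal]
    intro u hu
    have hle : Submodule.span ℝ S ≤ (Submodule.span ℝ {x})ᗮ := by
      rw [Submodule.span_le]
      intro a ha
      rw [SetLike.mem_coe, Submodule.mem_orthogonal_singleton_iff_inner_right]
      have h1 := hx a
      rw [Submodule.mem_iInf] at h1
      have h2 := h1 ha
      rwa [Submodule.mem_orthogonal_singleton_iff_inner_left] at h2
    have := hle hu
    rwa [Submodule.mem_orthogonal_singleton_iff_inner_left] at this
  · exact le_iInf₂ fun a ha => Submodule.orthogonal_le
      (Submodule.span_mono (Set.singleton_subset_iff.mpr ha))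

lemma mem_iInf_orth (S : Set V) (x : V) :
    x ∈ (⨅ α ∈ S, (Submodule.span ℝ {α})ᗮ) ↔ ∀ a ∈ S, ⟪a, x⟫ = 0 := by
  simp only [Submodule.mem_iInf, Submodule.mem_orthogonal_singleton_iff_inner_left]
  exact ⟨fun h a ha => by rw [real_inner_comm]; exact h a ha,
         fun h a ha => by rw [real_inner_comm]; exact h a ha⟩

/-- The basic properties propagate through the closure. -/
lemma closure_prop (Δ : Finset V)
    (hrefl : ∀ α ∈ Δ, ∀ β ∈ Δ, β - (2 * ⟪β, α⟫ / ⟪α, α⟫) • α ∈ Δ)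
    (H₀ : V) (w : V ≃ₗᵢ[ℝ] V)
    (hw : w ∈ Subgroup.closure
        {σ : V ≃ₗᵢ[ℝ] V | ∃ α : V, α ∈ Δ ∧ ⟪α, H₀⟫ = 0 ∧
          σ = Submodule.reflection (Submodule.span ℝ {α})ᗮ}) :
    ((∀ v : V, (∀ a ∈ Δ, ⟪a, H₀⟫ = 0 → ⟪a, v⟫ = 0) → w v = v) ∧
      (∀ β ∈ Δ, w β ∈ Δ ∧ ⟪w β, H₀⟫ = ⟪β, H₀⟫)) ∧
    ((∀ v : V, (∀ a ∈ Δ, ⟪a, H₀⟫ = 0 → ⟪a, v⟫ = 0) → w⁻¹ v = v) ∧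
      (∀ β ∈ Δ, w⁻¹ β ∈ Δ ∧ ⟪w⁻¹ β, H₀⟫ = ⟪β, H₀⟫)) := by
  induction hw using Subgroup.closure_induction with
  | mem x hx =>
    obtain ⟨α, hαΔ, hα0, rfl⟩ := hx
    have key : (∀ v : V, (∀ a ∈ Δ, ⟪a, H₀⟫ = 0 → ⟪a, v⟫ = 0) →
        Submodule.reflection (Submodule.span ℝ {α})ᗮ v = v) ∧
        (∀ β ∈ Δ, Submodule.reflection (Submodule.span ℝ {α})ᗮ β ∈ Δ ∧
          ⟪Submodule.reflection (Submodule.span ℝ {α})ᗮ β, H₀⟫ = ⟪β, H₀⟫) := by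
      constructor
      · intro v hv
        apply Submodule.reflection_mem_subspace_eq_self
        rw [Submodule.mem_orthogonal_singleton_iff_inner_right]
        exact hv α hαΔ hα0
      · intro β hβ
        rw [refl_formula]
        refine ⟨hrefl α hαΔ β hβ, ?_⟩
        rw [inner_sub_left, real_inner_smul_left, hα0]
        ring
    exact ⟨key, by rwa [Submodule.reflection_inv]⟩
  | one => simp
  | mul x y hx hy ihx ihy =>
    obtain ⟨⟨hx1, hx2⟩, ⟨hx3, hx4⟩⟩ := ihx
    obtain ⟨⟨hy1, hy2⟩, ⟨hy3, hy4⟩⟩ := ihy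
    refine ⟨⟨?_, ?_⟩, ?_, ?_⟩
    · intro v hv
      rw [LinearIsometryEquiv.coe_mul, Function.comp_apply, hy1 v hv, hx1 v hv]
    · intro β hβ
      rw [LinearIsometryEquiv.coe_mul, Function.comp_apply]
      obtain ⟨h1, h2⟩ := hy2 β hβ
      obtain ⟨h3, h4⟩ := hx2 _ h1
      exact ⟨h3, h4.trans h2⟩
    · intro v hv
      rw [mul_inv_rev, LinearIsometryEquiv.coe_mul, Function.comp_apply, hx3 v hv, hy3 v hv]
    · intro β hβ
      rw [mul_inv_rev, LinearIsometryEquiv.coe_mul, Function.comp_apply]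
      obtain ⟨h1, h2⟩ := hx4 β hβ
      obtain ⟨h3, h4⟩ := hy4 _ h1
      exact ⟨h3, h4.trans h2⟩
  | inv x hx ihx =>
    obtain ⟨h1, h2⟩ := ihx
    exact ⟨h2, by rwa [inv_inv]⟩

end Aux

theorem stmt13 {V : Type*} [NormedAddCommGroup V] [InnerProductSpace ℝ V]
    [FiniteDimensional ℝ V]
    (Δ : Finset V) (hΔ0 : (0 : V) ∉ Δ)
    (hrefl : ∀ α ∈ Δ, ∀ β ∈ Δ, β - (2 * ⟪β, α⟫ / ⟪α, α⟫) • α ∈ Δ)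
    (H₀ : V) (A : Submodule ℝ V)
    (hA : A = ⨅ α ∈ {a : V | a ∈ Δ ∧ ⟪a, H₀⟫ = 0}, (Submodule.span ℝ {α})ᗮ)
    (W₀ : Subgroup (V ≃ₗᵢ[ℝ] V))
    (hW₀ : W₀ = Subgroup.closure
        {σ : V ≃ₗᵢ[ℝ] V | ∃ α : V, α ∈ Δ ∧ ⟪α, H₀⟫ = 0 ∧
          σ = Submodule.reflection (Submodule.span ℝ {α})ᗮ}) :
    ∃ hfin : (W₀ : Set (V ≃ₗᵢ[ℝ] V)).Finite,
      (∀ w ∈ W₀, ∀ v ∈ A, w v = v) ∧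
      (∀ w ∈ W₀,
        (fun v => w v) '' {a : V | a ∈ Δ ∧ 0 < ⟪a, H₀⟫} = {a : V | a ∈ Δ ∧ 0 < ⟪a, H₀⟫} ∧
        (fun v => w v) '' {a : V | a ∈ Δ ∧ ⟪a, H₀⟫ = 0} = {a : V | a ∈ Δ ∧ ⟪a, H₀⟫ = 0} ∧
        (fun v => w v) '' {a : V | a ∈ Δ ∧ ⟪a, H₀⟫ < 0} =
          {a : V | a ∈ Δ ∧ ⟪a, H₀⟫ < 0}) ∧
      (∀ v : V, (Submodule.orthogonalProjectionOnto A v : V)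
          = (hfin.toFinset.card : ℝ)⁻¹ • ∑ w ∈ hfin.toFinset, w v) ∧
      (∀ X : V, (∀ a ∈ Δ, 0 < ⟪a, H₀⟫ → 0 < ⟪a, X⟫) →
        ∀ a ∈ Δ, 0 < ⟪a, H₀⟫ → 0 < ⟪a, (Submodule.orthogonalProjectionOnto A X : V)⟫) := by
  classical
  set S0 : Set V := {a : V | a ∈ Δ ∧ ⟪a, H₀⟫ = 0} with hS0
  -- basic properties of all elements of W₀
  have hQ : ∀ w ∈ W₀,
      (∀ v : V, (∀ a ∈ Δ, ⟪a, H₀⟫ = 0 → ⟪a, v⟫ = 0) → w v = v) ∧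
      (∀ β ∈ Δ, w β ∈ Δ ∧ ⟪w β, H₀⟫ = ⟪β, H₀⟫) := by
    intro w hw
    rw [hW₀] at hw
    exact (closure_prop Δ hrefl H₀ w hw).1
  have hmemA : ∀ x : V, x ∈ A ↔ ∀ a ∈ Δ, ⟪a, H₀⟫ = 0 → ⟪a, x⟫ = 0 := by
    intro x
    rw [hA, mem_iInf_orth]
    exact ⟨fun h a ha h0 => h a ⟨ha, h0⟩, fun h a ha => h a ha.1 ha.2⟩
  have hfixA : ∀ w ∈ W₀, ∀ v ∈ A, w v = v := by
    intro w hw v hv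
    exact (hQ w hw).1 v ((hmemA v).mp hv)
  -- images of the sign classes
  have himg : ∀ w ∈ W₀, ∀ P : ℝ → Prop,
      (fun v => w v) '' {a : V | a ∈ Δ ∧ P ⟪a, H₀⟫} = {a : V | a ∈ Δ ∧ P ⟪a, H₀⟫} := by
    intro w hw P
    have hwi : w⁻¹ ∈ W₀ := inv_mem hw
    apply Set.Subset.antisymm
    · rintro _ ⟨b, ⟨hb1, hb2⟩, rfl⟩
      obtain ⟨h1, h2⟩ := (hQ w hw).2 b hb1
      exact ⟨h1, h2 ▸ hb2⟩
    · rintro b ⟨hb1, hb2⟩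
      obtain ⟨h1, h2⟩ := (hQ w⁻¹ hwi).2 b hb1
      refine ⟨w⁻¹ b, ⟨h1, h2 ▸ hb2⟩, ?_⟩
      simp [LinearIsometryEquiv.coe_inv]
  -- finiteness
  have hS0fin : S0.Finite := (Δ.finite_toSet).subset fun a ha => ha.1
  have hAorth : A = (Submodule.span ℝ S0)ᗮ := by rw [hA, iInf_orth_eq]
  have hspan : (Submodule.span ℝ S0) = Aᗮ := by
    rw [hAorth, Submodule.orthogonal_orthogonal]
  have hext : ∀ w₁ ∈ W₀, ∀ w₂ ∈ W₀, (∀ a ∈ S0, w₁ a = w₂ a) → w₁ = w₂ := by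
    intro w₁ hw₁ w₂ hw₂ hagree
    have hspanagree : ∀ v ∈ Submodule.span ℝ S0, w₁ v = w₂ v := by
      intro v hv
      have : Set.EqOn (w₁.toLinearMap) (w₂.toLinearMap) S0 := fun a ha => hagree a ha
      have := LinearMap.eqOn_span this hv
      simpa using this
    ext v
    have hv : v = (Submodule.orthogonalProjectionOnto A v : V) + (v - Submodule.orthogonalProjectionOnto A v) := by abel
    have hmem1 : ((Submodule.orthogonalProjectionOnto A v : V)) ∈ A := (Submodule.orthogonalProjectionOnto A v).2
    have hmem2 : v - (Submodule.orthogonalProjectionOnto A v : V) ∈ Submodule.span ℝ S0 := by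
      rw [hspan]; exact Submodule.sub_starProjection_mem_orthogonal v
    calc w₁ v = w₁ ((Submodule.orthogonalProjectionOnto A v : V)) + w₁ (v - Submodule.orthogonalProjectionOnto A v) := by
          rw [← map_add, ← hv]
      _ = (Submodule.orthogonalProjectionOnto A v : V) + w₂ (v - Submodule.orthogonalProjectionOnto A v) := by
          rw [hfixA w₁ hw₁ _ hmem1, hspanagree _ hmem2]
      _ = w₂ ((Submodule.orthogonalProjectionOnto A v : V)) + w₂ (v - Submodule.orthogonalProjectionOnto A v) := by
          rw [hfixA w₂ hw₂ _ hmem1]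
      _ = w₂ v := by rw [← map_add, ← hv]
  have hmapS0 : ∀ w ∈ W₀, ∀ a ∈ S0, w a ∈ S0 := by
    intro w hw a ha
    obtain ⟨h1, h2⟩ := (hQ w hw).2 a ha.1
    exact ⟨h1, h2.trans ha.2⟩
  have hfin : (W₀ : Set (V ≃ₗᵢ[ℝ] V)).Finite := by
    have : Finite ↥(W₀ : Set (V ≃ₗᵢ[ℝ] V)) := by
      have : Finite ↥S0 := hS0fin
      refine Finite.of_injective
        (fun w : ↥(W₀ : Set (V ≃ₗᵢ[ℝ] V)) =>
          (fun a : ↥S0 => (⟨w.1 a.1, hmapS0 w.1 w.2 a.1 a.2⟩ : ↥S0))) ?_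
      intro w₁ w₂ h
      ext1
      apply hext w₁.1 w₁.2 w₂.1 w₂.2
      intro a ha
      have := congrFun h ⟨a, ha⟩
      exact Subtype.ext_iff.mp this
    exact Set.toFinite _
  have hmemT : ∀ w : V ≃ₗᵢ[ℝ] V, w ∈ hfin.toFinset ↔ w ∈ W₀ := fun w =>
    Set.Finite.mem_toFinset hfin
  have h1T : (1 : V ≃ₗᵢ[ℝ] V) ∈ hfin.toFinset := (hmemT 1).mpr (one_mem W₀)
  have hcard : (0 : ℝ) < (hfin.toFinset.card : ℝ) := by
    have : 0 < hfin.toFinset.card := Finset.card_pos.mpr ⟨1, h1T⟩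
    exact_mod_cast this
  have hproj : ∀ v : V, (Submodule.orthogonalProjectionOnto A v : V)
      = (hfin.toFinset.card : ℝ)⁻¹ • ∑ w ∈ hfin.toFinset, w v := by
    intro v
    set T := hfin.toFinset with hT
    set S := ∑ w ∈ T, w v with hS
    have hSfix : ∀ w₀ ∈ W₀, w₀ S = S := by
      intro w₀ hw₀
      rw [hS, map_sum]
      have : ∀ w ∈ T, w₀ (w v) = (w₀ * w) v := fun w _ => rfl
      rw [Finset.sum_congr rfl this]
      refine Finset.sum_bij' (fun w _ => w₀ * w) (fun u _ => w₀⁻¹ * u) ?_ ?_ ?_ ?_ ?_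
      · intro w hw
        rw [hmemT] at hw ⊢
        exact mul_mem hw₀ hw
      · intro u hu
        rw [hmemT] at hu ⊢
        exact mul_mem (inv_mem hw₀) hu
      · intro w _; exact inv_mul_cancel_left w₀ w
      · intro w _; exact mul_inv_cancel_left w₀ w
      · intro w _; rfl
    have hSA : S ∈ A := by
      rw [hA, mem_iInf_orth]
      rintro a ⟨haΔ, ha0⟩
      have hr : Submodule.reflection (Submodule.span ℝ {a})ᗮ ∈ W₀ := by
        rw [hW₀]
        exact Subgroup.subset_closure ⟨a, haΔ, ha0, rfl⟩
      have hfix := hSfix _ hr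
      rw [Submodule.reflection_eq_self_iff] at hfix
      rwa [Submodule.mem_orthogonal_singleton_iff_inner_right] at hfix
    apply Submodule.eq_starProjection_of_mem_of_inner_eq_zero
    · exact A.smul_mem _ hSA
    · intro u hu
      rw [inner_sub_left, real_inner_smul_left, hS, sum_inner]
      have : ∀ w ∈ T, ⟪w v, u⟫ = ⟪v, u⟫ := by
        intro w hw
        have hwu : w u = u := hfixA w ((hmemT w).mp hw) u hu
        calc ⟪w v, u⟫ = ⟪w v, w u⟫ := by rw [hwu]
          _ = ⟪v, u⟫ := w.inner_map_map v u
      rw [Finset.sum_congr rfl this, Finset.sum_const, nsmul_eq_mul]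
      rw [inv_mul_cancel_left₀ hcard.ne', sub_self]
  refine ⟨hfin, hfixA, fun w hw => ⟨himg w hw (fun x => 0 < x), himg w hw (fun x => x = 0),
    himg w hw (fun x => x < 0)⟩, hproj, ?_⟩
  intro X hX a haΔ ha
  rw [hproj X, real_inner_smul_right, inner_sum]
  apply mul_pos (inv_pos.mpr hcard)
  apply Finset.sum_pos _ ⟨1, h1T⟩
  intro w hw
  have hwW : w ∈ W₀ := (hmemT w).mp hw
  have hwa : w⁻¹ a ∈ Δ ∧ ⟪w⁻¹ a, H₀⟫ = ⟪a, H₀⟫ := (hQ w⁻¹ (inv_mem hwW)).2 a haΔ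
  have : ⟪a, w X⟫ = ⟪w⁻¹ a, X⟫ := by
    calc ⟪a, w X⟫ = ⟪w (w⁻¹ a), w X⟫ := by
          rw [LinearIsometryEquiv.coe_inv, w.apply_symm_apply]
      _ = ⟪w⁻¹ a, X⟫ := w.inner_map_map _ _
  rw [this]
  exact hX _ hwa.1 (hwa.2 ▸ ha)
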